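/- Let a > 0 and let z > 1 be real with D := 1 + (1 − a²)·ω² ≠ 0, where ω = z − √(z² − 1). Then the series whose 0-th term is −2(a² − 1)·ω³/D and whose n-th term for n ≥ 1 is −4(a² − 1)·z·ω^{2n+2}/D converges absolutely, and its sum equals 2(1 − a²)·ω²/(D·√(z² − 1)). -/

import Mathlib

/-- Trace formula: for `a > 0`, real `z > 1` with `D = 1 + (1 − a²)ω² ≠ 0`
(`ω = z − √(z² − 1)`), the series with 0-th term `−2(a² − 1)ω³/D` and `n`-th term
(`n ≥ 1`) `−4(a² − 1)zω^{2n+2}/D` converges absolutely and its sum equals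
`2(1 − a²)ω²/(D√(z² − 1))`. -/
theorem stmt14 (a z : ℝ) (ha : 0 < a) (hz : 1 < z)
    (hD : 1 + (1 - a ^ 2) * (z - Real.sqrt (z ^ 2 - 1)) ^ 2 ≠ 0) :
    let ω : ℝ := z - Real.sqrt (z ^ 2 - 1)
    let D : ℝ := 1 + (1 - a ^ 2) * ω ^ 2
    let f : ℕ → ℝ := fun n =>
      if n = 0 then -2 * (a ^ 2 - 1) * ω ^ 3 / D
      else -4 * (a ^ 2 - 1) * z * ω ^ (2 * n + 2) / D
    Summable (fun n : ℕ => |f n|) ∧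
    ∑' n : ℕ, f n = 2 * (1 - a ^ 2) * ω ^ 2 / (D * Real.sqrt (z ^ 2 - 1)) := by
  intro ω D f
  have hz2 : (0:ℝ) < z ^ 2 - 1 := by nlinarith
  have hs0 : 0 < Real.sqrt (z ^ 2 - 1) := Real.sqrt_pos.mpr hz2
  set s : ℝ := Real.sqrt (z ^ 2 - 1) with hs
  have hs2 : s ^ 2 = z ^ 2 - 1 := Real.sq_sqrt hz2.le
  have hωdef : ω = z - s := rfl
  have hω0 : 0 < ω := by
    have hlt : s < z := by nlinarith
    rw [hωdef]; linarith
  have hωs : ω * (z + s) = 1 := by rw [hωdef]; nlinarith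
  have hr : ω ^ 2 < 1 := by nlinarith
  have hr0 : (0:ℝ) ≤ ω ^ 2 := sq_nonneg _
  have hkey : 1 - ω ^ 2 = 2 * s * ω := by rw [hωdef]; nlinarith
  have hDne : D ≠ 0 := hD
  have hsum1 : Summable (fun n : ℕ => |f (n + 1)|) := by
    have heq : (fun n : ℕ => |f (n + 1)|)
        = fun n : ℕ => |-4 * (a ^ 2 - 1) * z * ω ^ 4 / D| * (ω ^ 2) ^ n := by
      funext n
      have h1 : f (n + 1) = -4 * (a ^ 2 - 1) * z * ω ^ (2 * (n + 1) + 2) / D := by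
        simp [f]
      rw [h1]
      have : ω ^ (2 * (n + 1) + 2) = ω ^ 4 * (ω ^ 2) ^ n := by
        rw [← pow_mul]; ring
      have h3 : -4 * (a ^ 2 - 1) * z * (ω ^ 4 * (ω ^ 2) ^ n) / D
          = (-4 * (a ^ 2 - 1) * z * ω ^ 4 / D) * (ω ^ 2) ^ n := by ring
      rw [this, h3, abs_mul, abs_of_nonneg (pow_nonneg hr0 n)]
    rw [heq]
    exact (summable_geometric_of_lt_one hr0 hr).mul_left _
  have hsumabs : Summable (fun n : ℕ => |f n|) :=
    (summable_nat_add_iff 1).mp hsum1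
  have hsumf : Summable f := hsumabs.of_abs
  refine ⟨hsumabs, ?_⟩
  rw [Summable.tsum_eq_zero_add hsumf]
  have h2 : (fun n : ℕ => f (n + 1))
      = fun n : ℕ => (-4 * (a ^ 2 - 1) * z * ω ^ 4 / D) * (ω ^ 2) ^ n := by
    funext n
    have h1 : f (n + 1) = -4 * (a ^ 2 - 1) * z * ω ^ (2 * (n + 1) + 2) / D := by
      simp [f]
    rw [h1]
    have : ω ^ (2 * (n + 1) + 2) = ω ^ 4 * (ω ^ 2) ^ n := by
      rw [← pow_mul]; ring
    rw [this]; ring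
  rw [h2, tsum_mul_left, tsum_geometric_of_lt_one hr0 hr]
  have hf0 : f 0 = -2 * (a ^ 2 - 1) * ω ^ 3 / D := by simp [f]
  rw [hf0]
  have h1mω : (1 : ℝ) - ω ^ 2 ≠ 0 := by rw [hkey]; positivity
  rw [hkey]
  field_simp
  linear_combination (-4 * (a ^ 2 - 1)) * hωs
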